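/- The eigenspace of the operator Y for the eigenvalue 7 is the 3-dimensional space of antisymmetric matrices spanned by A₁ = E^{03} − E^{30} − 3E^{12} + 3E^{21}, A₂ = E^{04} − E^{40} − 2E^{13} + 2E^{31}, and A₃ = E^{14} − E^{41} − 3E^{23} + 3E^{32}, where E^{ij} denotes the 5×5 matrix unit with 1 in entry (i,j) and 0 elsewhere. (These correspond to the 2-forms θ⁰∧θ³ − 3θ¹∧θ², θ⁰∧θ⁴ − 2θ¹∧θ³, θ¹∧θ⁴ − 3θ²∧θ³ spanning the representation Λ₃.) -/

import Mathlib

set_option maxHeartbeats 2000000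


/-- The inverse metric `g^{ij}`. -/
noncomputable def ginv : Matrix (Fin 5) (Fin 5) ℝ :=
  !![0, 0, 0, 0, 2;
     0, 0, 0, -1/2, 0;
     0, 0, 1/3, 0, 0;
     0, -1/2, 0, 0, 0;
     2, 0, 0, 0, 0]

/-- The totally symmetric tensor `Υ_{ijk}`. -/
noncomputable def Ups (i j k : Fin 5) : ℝ :=
  if ({i, j, k} : Multiset (Fin 5)) = {0, 2, 4} then Real.sqrt 3 / 2
  else if ({i, j, k} : Multiset (Fin 5)) = {1, 2, 3} then Real.sqrt 3
  else if ({i, j, k} : Multiset (Fin 5)) = {2, 2, 2} then -3 * Real.sqrt 3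
  else if ({i, j, k} : Multiset (Fin 5)) = {0, 3, 3} then -Real.sqrt 3
  else if ({i, j, k} : Multiset (Fin 5)) = {1, 1, 4} then -Real.sqrt 3
  else 0

/-- The operator `Y(w)_{ik} = 4 g^{ab} Υ_{ija} Υ_{klb} g^{mj} g^{pl} w_{mp}` on `5×5` matrices. -/
noncomputable def Yop : Matrix (Fin 5) (Fin 5) ℝ →ₗ[ℝ] Matrix (Fin 5) (Fin 5) ℝ where
  toFun w := Matrix.of fun i k =>
    4 * ∑ j : Fin 5, ∑ l : Fin 5, ∑ a : Fin 5, ∑ b : Fin 5, ∑ m : Fin 5, ∑ p : Fin 5,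
        ginv a b * Ups i j a * Ups k l b * ginv m j * ginv p l * w m p
  map_add' w₁ w₂ := by
    funext i k
    simp only [Matrix.of_apply, Matrix.add_apply, mul_add, Finset.sum_add_distrib]
  map_smul' c w := by
    funext i k
    simp only [Matrix.of_apply, Matrix.smul_apply, smul_eq_mul, RingHom.id_apply,
      Finset.mul_sum]
    congr 1
    ext j; congr 1
    ext l; congr 1
    ext a; congr 1
    ext b; congr 1
    ext m; congr 1
    ext p
    ring

/-- `A₁ = E⁰³ − E³⁰ − 3E¹² + 3E²¹`, corresponding to the 2-form `θ⁰∧θ³ − 3θ¹∧θ²`. -/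
noncomputable def A1 : Matrix (Fin 5) (Fin 5) ℝ :=
  Matrix.single 0 3 1 - Matrix.single 3 0 1
    - (3 : ℝ) • Matrix.single 1 2 1 + (3 : ℝ) • Matrix.single 2 1 1

/-- `A₂ = E⁰⁴ − E⁴⁰ − 2E¹³ + 2E³¹`, corresponding to the 2-form `θ⁰∧θ⁴ − 2θ¹∧θ³`. -/
noncomputable def A2 : Matrix (Fin 5) (Fin 5) ℝ :=
  Matrix.single 0 4 1 - Matrix.single 4 0 1
    - (2 : ℝ) • Matrix.single 1 3 1 + (2 : ℝ) • Matrix.single 3 1 1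

/-- `A₃ = E¹⁴ − E⁴¹ − 3E²³ + 3E³²`, corresponding to the 2-form `θ¹∧θ⁴ − 3θ²∧θ³`. -/
noncomputable def A3 : Matrix (Fin 5) (Fin 5) ℝ :=
  Matrix.single 1 4 1 - Matrix.single 4 1 1
    - (3 : ℝ) • Matrix.single 2 3 1 + (3 : ℝ) • Matrix.single 3 2 1


private def σf : Fin 5 → Fin 5 := ![4, 3, 2, 1, 0]
private noncomputable def gd : Fin 5 → ℝ := ![2, -1/2, 1/3, -1/2, 2]

private lemma step1 (C : ℝ) (l : Fin 5) (f : Fin 5 → ℝ) :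
    (∑ p, C * ginv p l * f p) = C * (gd l * f (σf l)) := by
  fin_cases l <;> simp [Fin.sum_univ_five, ginv, gd, σf, Matrix.vecHead, Matrix.vecTail] <;> ring

private lemma step3 (a : Fin 5) (c Y : ℝ) (U : Fin 5 → ℝ) :
    (∑ b, ginv a b * c * U b * Y) = gd a * (c * (U (σf a) * Y)) := by
  fin_cases a <;> simp [Fin.sum_univ_five, ginv, gd, σf, Matrix.vecHead, Matrix.vecTail] <;> ring

private lemma Yop_apply (w : Matrix (Fin 5) (Fin 5) ℝ) (i k : Fin 5) :
    Yop w i k = 4 * ∑ j, ∑ l, ∑ a,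
      gd a * (Ups i j a * (Ups k l (σf a) * (gd j * (gd l * w (σf j) (σf l))))) := by
  simp only [Yop, LinearMap.coe_mk, AddHom.coe_mk, Matrix.of_apply]
  simp only [step1]
  simp only [step3]
  rfl

private lemma sqrt3_sq : Real.sqrt 3 * Real.sqrt 3 = 3 := Real.mul_self_sqrt (by norm_num)

private noncomputable def U3 : Fin 5 → Fin 5 → Fin 5 → ℝ :=
  ![![![0, 0, 0, 0, 0],
     ![0, 0, 0, 0, 0],
     ![0, 0, 0, 0, 1/2],
     ![0, 0, 0, -1, 0],
     ![0, 0, 1/2, 0, 0]],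
   ![![0, 0, 0, 0, 0],
     ![0, 0, 0, 0, -1],
     ![0, 0, 0, 1, 0],
     ![0, 0, 1, 0, 0],
     ![0, -1, 0, 0, 0]],
   ![![0, 0, 0, 0, 1/2],
     ![0, 0, 0, 1, 0],
     ![0, 0, -3, 0, 0],
     ![0, 1, 0, 0, 0],
     ![1/2, 0, 0, 0, 0]],
   ![![0, 0, 0, -1, 0],
     ![0, 0, 1, 0, 0],
     ![0, 1, 0, 0, 0],
     ![-1, 0, 0, 0, 0],
     ![0, 0, 0, 0, 0]],
   ![![0, 0, 1/2, 0, 0],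
     ![0, -1, 0, 0, 0],
     ![1/2, 0, 0, 0, 0],
     ![0, 0, 0, 0, 0],
     ![0, 0, 0, 0, 0]]]

private lemma Ups_eq (i j k : Fin 5) : Ups i j k = Real.sqrt 3 * U3 i j k := by
  fin_cases i <;> fin_cases j <;> fin_cases k <;>
    (simp (config := { decide := true }) [Ups, U3, Matrix.vecHead, Matrix.vecTail]; try ring)

private lemma gdUps (i j a k l : Fin 5) (Z : ℝ) :
    gd a * (Ups i j a * (Ups k l (σf a) * Z))
      = 3 * (gd a * (U3 i j a * (U3 k l (σf a) * Z))) := by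
  rw [Ups_eq, Ups_eq]
  linear_combination (gd a * (U3 i j a * (U3 k l (σf a) * Z))) * sqrt3_sq

private lemma Yop_apply2 (w : Matrix (Fin 5) (Fin 5) ℝ) (i k : Fin 5) :
    Yop w i k = 12 * ∑ j, ∑ l, ∑ a,
      gd a * (U3 i j a * (U3 k l (σf a) * (gd j * (gd l * w (σf j) (σf l))))) := by
  rw [Yop_apply]
  simp only [gdUps, ← Finset.mul_sum]
  ring

private lemma eigA1 : Yop A1 = (7:ℝ) • A1 := by
  ext i k
  rw [Matrix.smul_apply, Yop_apply2]
  fin_cases i <;> fin_cases k <;>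
    (simp (config := { decide := true }) [Fin.sum_univ_five, U3, gd, σf, A1, Matrix.single,
      Matrix.add_apply, Matrix.sub_apply, Matrix.smul_apply, smul_eq_mul,
      Matrix.vecHead, Matrix.vecTail]; try norm_num)

private lemma eigA2 : Yop A2 = (7:ℝ) • A2 := by
  ext i k
  rw [Matrix.smul_apply, Yop_apply2]
  fin_cases i <;> fin_cases k <;>
    (simp (config := { decide := true }) [Fin.sum_univ_five, U3, gd, σf, A2, Matrix.single,
      Matrix.add_apply, Matrix.sub_apply, Matrix.smul_apply, smul_eq_mul,
      Matrix.vecHead, Matrix.vecTail]; try norm_num)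

private lemma eigA3 : Yop A3 = (7:ℝ) • A3 := by
  ext i k
  rw [Matrix.smul_apply, Yop_apply2]
  fin_cases i <;> fin_cases k <;>
    (simp (config := { decide := true }) [Fin.sum_univ_five, U3, gd, σf, A3, Matrix.single,
      Matrix.add_apply, Matrix.sub_apply, Matrix.smul_apply, smul_eq_mul,
      Matrix.vecHead, Matrix.vecTail]; try norm_num)

/-- The eigenspace of `Y` for the eigenvalue `7` is spanned by `A₁, A₂, A₃`. -/
theorem stmt10 :
    Module.End.eigenspace Yop 7
      = Submodule.span ℝ ({A1, A2, A3} : Set (Matrix (Fin 5) (Fin 5) ℝ)) := by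
  apply le_antisymm
  · intro w hw
    rw [Module.End.mem_eigenspace_iff] at hw
    have E : ∀ i k : Fin 5, Yop w i k = 7 * w i k := fun i k => by
      rw [hw, Matrix.smul_apply, smul_eq_mul]
    have h00 : (4) * w 0 0 = 7 * w 0 0 := by
      rw [← E 0 0, Yop_apply2]; simp [Fin.sum_univ_five, U3, gd, σf, Matrix.vecHead, Matrix.vecTail]; try ring
    have h01 : (-2) * w 0 1 + (6) * w 1 0 = 7 * w 0 1 := by
      rw [← E 0 1, Yop_apply2]; simp [Fin.sum_univ_five, U3, gd, σf, Matrix.vecHead, Matrix.vecTail]; try ring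
    have h02 : (-4) * w 0 2 + (3/2) * w 1 1 + (4) * w 2 0 = 7 * w 0 2 := by
      rw [← E 0 2, Yop_apply2]; simp [Fin.sum_univ_five, U3, gd, σf, Matrix.vecHead, Matrix.vecTail]; try ring
    have h03 : (-2) * w 0 3 + (-1) * w 1 2 + (2) * w 2 1 = 7 * w 0 3 := by
      rw [← E 0 3, Yop_apply2]; simp [Fin.sum_univ_five, U3, gd, σf, Matrix.vecHead, Matrix.vecTail]; try ring
    have h04 : (4) * w 0 4 + (-3/2) * w 1 3 + (2/3) * w 2 2 = 7 * w 0 4 := by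
      rw [← E 0 4, Yop_apply2]; simp [Fin.sum_univ_five, U3, gd, σf, Matrix.vecHead, Matrix.vecTail]; try ring
    have h10 : (6) * w 0 1 + (-2) * w 1 0 = 7 * w 1 0 := by
      rw [← E 1 0, Yop_apply2]; simp [Fin.sum_univ_five, U3, gd, σf, Matrix.vecHead, Matrix.vecTail]; try ring
    have h11 : (4) * w 0 2 + (1) * w 1 1 + (4) * w 2 0 = 7 * w 1 1 := by
      rw [← E 1 1, Yop_apply2]; simp [Fin.sum_univ_five, U3, gd, σf, Matrix.vecHead, Matrix.vecTail]; try ring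
    have h12 : (-6) * w 0 3 + (2) * w 1 2 + (1) * w 2 1 + (12) * w 3 0 = 7 * w 1 2 := by
      rw [← E 1 2, Yop_apply2]; simp [Fin.sum_univ_five, U3, gd, σf, Matrix.vecHead, Matrix.vecTail]; try ring
    have h13 : (-24) * w 0 4 + (1) * w 1 3 + (-2/3) * w 2 2 + (6) * w 3 1 = 7 * w 1 3 := by
      rw [← E 1 3, Yop_apply2]; simp [Fin.sum_univ_five, U3, gd, σf, Matrix.vecHead, Matrix.vecTail]; try ring
    have h14 : (-2) * w 1 4 + (-1) * w 2 3 + (2) * w 3 2 = 7 * w 1 4 := by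
      rw [← E 1 4, Yop_apply2]; simp [Fin.sum_univ_five, U3, gd, σf, Matrix.vecHead, Matrix.vecTail]; try ring
    have h20 : (4) * w 0 2 + (3/2) * w 1 1 + (-4) * w 2 0 = 7 * w 2 0 := by
      rw [← E 2 0, Yop_apply2]; simp [Fin.sum_univ_five, U3, gd, σf, Matrix.vecHead, Matrix.vecTail]; try ring
    have h21 : (12) * w 0 3 + (1) * w 1 2 + (2) * w 2 1 + (-6) * w 3 0 = 7 * w 2 1 := by
      rw [← E 2 1, Yop_apply2]; simp [Fin.sum_univ_five, U3, gd, σf, Matrix.vecHead, Matrix.vecTail]; try ring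
    have h22 : (24) * w 0 4 + (-3/2) * w 1 3 + (4) * w 2 2 + (-3/2) * w 3 1 + (24) * w 4 0 = 7 * w 2 2 := by
      rw [← E 2 2, Yop_apply2]; simp [Fin.sum_univ_five, U3, gd, σf, Matrix.vecHead, Matrix.vecTail]; try ring
    have h23 : (-6) * w 1 4 + (2) * w 2 3 + (1) * w 3 2 + (12) * w 4 1 = 7 * w 2 3 := by
      rw [← E 2 3, Yop_apply2]; simp [Fin.sum_univ_five, U3, gd, σf, Matrix.vecHead, Matrix.vecTail]; try ring
    have h24 : (-4) * w 2 4 + (3/2) * w 3 3 + (4) * w 4 2 = 7 * w 2 4 := by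
      rw [← E 2 4, Yop_apply2]; simp [Fin.sum_univ_five, U3, gd, σf, Matrix.vecHead, Matrix.vecTail]; try ring
    have h30 : (2) * w 1 2 + (-1) * w 2 1 + (-2) * w 3 0 = 7 * w 3 0 := by
      rw [← E 3 0, Yop_apply2]; simp [Fin.sum_univ_five, U3, gd, σf, Matrix.vecHead, Matrix.vecTail]; try ring
    have h31 : (6) * w 1 3 + (-2/3) * w 2 2 + (1) * w 3 1 + (-24) * w 4 0 = 7 * w 3 1 := by
      rw [← E 3 1, Yop_apply2]; simp [Fin.sum_univ_five, U3, gd, σf, Matrix.vecHead, Matrix.vecTail]; try ring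
    have h32 : (12) * w 1 4 + (1) * w 2 3 + (2) * w 3 2 + (-6) * w 4 1 = 7 * w 3 2 := by
      rw [← E 3 2, Yop_apply2]; simp [Fin.sum_univ_five, U3, gd, σf, Matrix.vecHead, Matrix.vecTail]; try ring
    have h33 : (4) * w 2 4 + (1) * w 3 3 + (4) * w 4 2 = 7 * w 3 3 := by
      rw [← E 3 3, Yop_apply2]; simp [Fin.sum_univ_five, U3, gd, σf, Matrix.vecHead, Matrix.vecTail]; try ring
    have h34 : (-2) * w 3 4 + (6) * w 4 3 = 7 * w 3 4 := by
      rw [← E 3 4, Yop_apply2]; simp [Fin.sum_univ_five, U3, gd, σf, Matrix.vecHead, Matrix.vecTail]; try ring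
    have h40 : (2/3) * w 2 2 + (-3/2) * w 3 1 + (4) * w 4 0 = 7 * w 4 0 := by
      rw [← E 4 0, Yop_apply2]; simp [Fin.sum_univ_five, U3, gd, σf, Matrix.vecHead, Matrix.vecTail]; try ring
    have h41 : (2) * w 2 3 + (-1) * w 3 2 + (-2) * w 4 1 = 7 * w 4 1 := by
      rw [← E 4 1, Yop_apply2]; simp [Fin.sum_univ_five, U3, gd, σf, Matrix.vecHead, Matrix.vecTail]; try ring
    have h42 : (4) * w 2 4 + (3/2) * w 3 3 + (-4) * w 4 2 = 7 * w 4 2 := by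
      rw [← E 4 2, Yop_apply2]; simp [Fin.sum_univ_five, U3, gd, σf, Matrix.vecHead, Matrix.vecTail]; try ring
    have h43 : (6) * w 3 4 + (-2) * w 4 3 = 7 * w 4 3 := by
      rw [← E 4 3, Yop_apply2]; simp [Fin.sum_univ_five, U3, gd, σf, Matrix.vecHead, Matrix.vecTail]; try ring
    have h44 : (4) * w 4 4 = 7 * w 4 4 := by
      rw [← E 4 4, Yop_apply2]; simp [Fin.sum_univ_five, U3, gd, σf, Matrix.vecHead, Matrix.vecTail]; try ring
    have hw' : w = w 0 3 • A1 + w 0 4 • A2 + w 1 4 • A3 := by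
      ext i k
      fin_cases i <;> fin_cases k
      · show w 0 0 = (w 0 3 • A1 + w 0 4 • A2 + w 1 4 • A3) 0 0
        have hv : (w 0 3 • A1 + w 0 4 • A2 + w 1 4 • A3) 0 0 = (0:ℝ) := by
          simp (config := { decide := true }) [A1, A2, A3, Matrix.single,
            Matrix.add_apply, Matrix.sub_apply, Matrix.smul_apply, smul_eq_mul]
          try ring
        rw [hv]; linear_combination (-1/3) * h00
      · show w 0 1 = (w 0 3 • A1 + w 0 4 • A2 + w 1 4 • A3) 0 1
        have hv : (w 0 3 • A1 + w 0 4 • A2 + w 1 4 • A3) 0 1 = (0:ℝ) := by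
          simp (config := { decide := true }) [A1, A2, A3, Matrix.single,
            Matrix.add_apply, Matrix.sub_apply, Matrix.smul_apply, smul_eq_mul]
          try ring
        rw [hv]; linear_combination (-1/5) * h01 + (-2/15) * h10
      · show w 0 2 = (w 0 3 • A1 + w 0 4 • A2 + w 1 4 • A3) 0 2
        have hv : (w 0 3 • A1 + w 0 4 • A2 + w 1 4 • A3) 0 2 = (0:ℝ) := by
          simp (config := { decide := true }) [A1, A2, A3, Matrix.single,
            Matrix.add_apply, Matrix.sub_apply, Matrix.smul_apply, smul_eq_mul]
          try ring
        rw [hv]; linear_combination (-2/15) * h02 + (-1/20) * h11 + (-1/15) * h20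
      · show w 0 3 = (w 0 3 • A1 + w 0 4 • A2 + w 1 4 • A3) 0 3
        have hv : (w 0 3 • A1 + w 0 4 • A2 + w 1 4 • A3) 0 3 = (1) * w 0 3 := by
          simp (config := { decide := true }) [A1, A2, A3, Matrix.single,
            Matrix.add_apply, Matrix.sub_apply, Matrix.smul_apply, smul_eq_mul]
          try ring
        rw [hv]; linear_combination
      · show w 0 4 = (w 0 3 • A1 + w 0 4 • A2 + w 1 4 • A3) 0 4
        have hv : (w 0 3 • A1 + w 0 4 • A2 + w 1 4 • A3) 0 4 = (1) * w 0 4 := by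
          simp (config := { decide := true }) [A1, A2, A3, Matrix.single,
            Matrix.add_apply, Matrix.sub_apply, Matrix.smul_apply, smul_eq_mul]
          try ring
        rw [hv]; linear_combination
      · show w 1 0 = (w 0 3 • A1 + w 0 4 • A2 + w 1 4 • A3) 1 0
        have hv : (w 0 3 • A1 + w 0 4 • A2 + w 1 4 • A3) 1 0 = (0:ℝ) := by
          simp (config := { decide := true }) [A1, A2, A3, Matrix.single,
            Matrix.add_apply, Matrix.sub_apply, Matrix.smul_apply, smul_eq_mul]
          try ring
        rw [hv]; linear_combination (-2/15) * h01 + (-1/5) * h10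
      · show w 1 1 = (w 0 3 • A1 + w 0 4 • A2 + w 1 4 • A3) 1 1
        have hv : (w 0 3 • A1 + w 0 4 • A2 + w 1 4 • A3) 1 1 = (0:ℝ) := by
          simp (config := { decide := true }) [A1, A2, A3, Matrix.single,
            Matrix.add_apply, Matrix.sub_apply, Matrix.smul_apply, smul_eq_mul]
          try ring
        rw [hv]; linear_combination (-2/15) * h02 + (-7/30) * h11 + (-2/15) * h20
      · show w 1 2 = (w 0 3 • A1 + w 0 4 • A2 + w 1 4 • A3) 1 2
        have hv : (w 0 3 • A1 + w 0 4 • A2 + w 1 4 • A3) 1 2 = (-3) * w 0 3 := by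
          simp (config := { decide := true }) [A1, A2, A3, Matrix.single,
            Matrix.add_apply, Matrix.sub_apply, Matrix.smul_apply, smul_eq_mul]
          try ring
        rw [hv]; linear_combination (-3/5) * h03 + (-2/15) * h12 + (-4/15) * h21
      · show w 1 3 = (w 0 3 • A1 + w 0 4 • A2 + w 1 4 • A3) 1 3
        have hv : (w 0 3 • A1 + w 0 4 • A2 + w 1 4 • A3) 1 3 = (-2) * w 0 4 := by
          simp (config := { decide := true }) [A1, A2, A3, Matrix.single,
            Matrix.add_apply, Matrix.sub_apply, Matrix.smul_apply, smul_eq_mul]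
          try ring
        rw [hv]; linear_combination (-18/35) * h04 + (-2/21) * h13 + (-8/105) * h22 + (-8/105) * h31
      · show w 1 4 = (w 0 3 • A1 + w 0 4 • A2 + w 1 4 • A3) 1 4
        have hv : (w 0 3 • A1 + w 0 4 • A2 + w 1 4 • A3) 1 4 = (1) * w 1 4 := by
          simp (config := { decide := true }) [A1, A2, A3, Matrix.single,
            Matrix.add_apply, Matrix.sub_apply, Matrix.smul_apply, smul_eq_mul]
          try ring
        rw [hv]; linear_combination
      · show w 2 0 = (w 0 3 • A1 + w 0 4 • A2 + w 1 4 • A3) 2 0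
        have hv : (w 0 3 • A1 + w 0 4 • A2 + w 1 4 • A3) 2 0 = (0:ℝ) := by
          simp (config := { decide := true }) [A1, A2, A3, Matrix.single,
            Matrix.add_apply, Matrix.sub_apply, Matrix.smul_apply, smul_eq_mul]
          try ring
        rw [hv]; linear_combination (-1/15) * h02 + (-1/20) * h11 + (-2/15) * h20
      · show w 2 1 = (w 0 3 • A1 + w 0 4 • A2 + w 1 4 • A3) 2 1
        have hv : (w 0 3 • A1 + w 0 4 • A2 + w 1 4 • A3) 2 1 = (3) * w 0 3 := by
          simp (config := { decide := true }) [A1, A2, A3, Matrix.single,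
            Matrix.add_apply, Matrix.sub_apply, Matrix.smul_apply, smul_eq_mul]
          try ring
        rw [hv]; linear_combination (1/5) * h03 + (-1/15) * h12 + (-2/15) * h21
      · show w 2 2 = (w 0 3 • A1 + w 0 4 • A2 + w 1 4 • A3) 2 2
        have hv : (w 0 3 • A1 + w 0 4 • A2 + w 1 4 • A3) 2 2 = (0:ℝ) := by
          simp (config := { decide := true }) [A1, A2, A3, Matrix.single,
            Matrix.add_apply, Matrix.sub_apply, Matrix.smul_apply, smul_eq_mul]
          try ring
        rw [hv]; linear_combination (12/35) * h04 + (-3/14) * h13 + (-6/35) * h22 + (-6/35) * h31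
      · show w 2 3 = (w 0 3 • A1 + w 0 4 • A2 + w 1 4 • A3) 2 3
        have hv : (w 0 3 • A1 + w 0 4 • A2 + w 1 4 • A3) 2 3 = (-3) * w 1 4 := by
          simp (config := { decide := true }) [A1, A2, A3, Matrix.single,
            Matrix.add_apply, Matrix.sub_apply, Matrix.smul_apply, smul_eq_mul]
          try ring
        rw [hv]; linear_combination (-3/5) * h14 + (-2/15) * h23 + (-4/15) * h32
      · show w 2 4 = (w 0 3 • A1 + w 0 4 • A2 + w 1 4 • A3) 2 4
        have hv : (w 0 3 • A1 + w 0 4 • A2 + w 1 4 • A3) 2 4 = (0:ℝ) := by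
          simp (config := { decide := true }) [A1, A2, A3, Matrix.single,
            Matrix.add_apply, Matrix.sub_apply, Matrix.smul_apply, smul_eq_mul]
          try ring
        rw [hv]; linear_combination (-2/15) * h24 + (-1/20) * h33 + (-1/15) * h42
      · show w 3 0 = (w 0 3 • A1 + w 0 4 • A2 + w 1 4 • A3) 3 0
        have hv : (w 0 3 • A1 + w 0 4 • A2 + w 1 4 • A3) 3 0 = (-1) * w 0 3 := by
          simp (config := { decide := true }) [A1, A2, A3, Matrix.single,
            Matrix.add_apply, Matrix.sub_apply, Matrix.smul_apply, smul_eq_mul]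
          try ring
        rw [hv]; linear_combination (-4/15) * h03 + (1/30) * h12 + (-1/10) * h21
      · show w 3 1 = (w 0 3 • A1 + w 0 4 • A2 + w 1 4 • A3) 3 1
        have hv : (w 0 3 • A1 + w 0 4 • A2 + w 1 4 • A3) 3 1 = (2) * w 0 4 := by
          simp (config := { decide := true }) [A1, A2, A3, Matrix.single,
            Matrix.add_apply, Matrix.sub_apply, Matrix.smul_apply, smul_eq_mul]
          try ring
        rw [hv]; linear_combination (-10/21) * h04 + (1/21) * h13 + (-2/21) * h22 + (-2/21) * h31
      · show w 3 2 = (w 0 3 • A1 + w 0 4 • A2 + w 1 4 • A3) 3 2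
        have hv : (w 0 3 • A1 + w 0 4 • A2 + w 1 4 • A3) 3 2 = (3) * w 1 4 := by
          simp (config := { decide := true }) [A1, A2, A3, Matrix.single,
            Matrix.add_apply, Matrix.sub_apply, Matrix.smul_apply, smul_eq_mul]
          try ring
        rw [hv]; linear_combination (1/5) * h14 + (-1/15) * h23 + (-2/15) * h32
      · show w 3 3 = (w 0 3 • A1 + w 0 4 • A2 + w 1 4 • A3) 3 3
        have hv : (w 0 3 • A1 + w 0 4 • A2 + w 1 4 • A3) 3 3 = (0:ℝ) := by
          simp (config := { decide := true }) [A1, A2, A3, Matrix.single,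
            Matrix.add_apply, Matrix.sub_apply, Matrix.smul_apply, smul_eq_mul]
          try ring
        rw [hv]; linear_combination (-2/15) * h24 + (-7/30) * h33 + (-2/15) * h42
      · show w 3 4 = (w 0 3 • A1 + w 0 4 • A2 + w 1 4 • A3) 3 4
        have hv : (w 0 3 • A1 + w 0 4 • A2 + w 1 4 • A3) 3 4 = (0:ℝ) := by
          simp (config := { decide := true }) [A1, A2, A3, Matrix.single,
            Matrix.add_apply, Matrix.sub_apply, Matrix.smul_apply, smul_eq_mul]
          try ring
        rw [hv]; linear_combination (-1/5) * h34 + (-2/15) * h43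
      · show w 4 0 = (w 0 3 • A1 + w 0 4 • A2 + w 1 4 • A3) 4 0
        have hv : (w 0 3 • A1 + w 0 4 • A2 + w 1 4 • A3) 4 0 = (-1) * w 0 4 := by
          simp (config := { decide := true }) [A1, A2, A3, Matrix.single,
            Matrix.add_apply, Matrix.sub_apply, Matrix.smul_apply, smul_eq_mul]
          try ring
        rw [hv]; linear_combination (-2/105) * h04 + (-5/168) * h13 + (1/105) * h22 + (-9/280) * h31
      · show w 4 1 = (w 0 3 • A1 + w 0 4 • A2 + w 1 4 • A3) 4 1
        have hv : (w 0 3 • A1 + w 0 4 • A2 + w 1 4 • A3) 4 1 = (-1) * w 1 4 := by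
          simp (config := { decide := true }) [A1, A2, A3, Matrix.single,
            Matrix.add_apply, Matrix.sub_apply, Matrix.smul_apply, smul_eq_mul]
          try ring
        rw [hv]; linear_combination (-4/15) * h14 + (1/30) * h23 + (-1/10) * h32
      · show w 4 2 = (w 0 3 • A1 + w 0 4 • A2 + w 1 4 • A3) 4 2
        have hv : (w 0 3 • A1 + w 0 4 • A2 + w 1 4 • A3) 4 2 = (0:ℝ) := by
          simp (config := { decide := true }) [A1, A2, A3, Matrix.single,
            Matrix.add_apply, Matrix.sub_apply, Matrix.smul_apply, smul_eq_mul]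
          try ring
        rw [hv]; linear_combination (-1/15) * h24 + (-1/20) * h33 + (-2/15) * h42
      · show w 4 3 = (w 0 3 • A1 + w 0 4 • A2 + w 1 4 • A3) 4 3
        have hv : (w 0 3 • A1 + w 0 4 • A2 + w 1 4 • A3) 4 3 = (0:ℝ) := by
          simp (config := { decide := true }) [A1, A2, A3, Matrix.single,
            Matrix.add_apply, Matrix.sub_apply, Matrix.smul_apply, smul_eq_mul]
          try ring
        rw [hv]; linear_combination (-2/15) * h34 + (-1/5) * h43
      · show w 4 4 = (w 0 3 • A1 + w 0 4 • A2 + w 1 4 • A3) 4 4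
        have hv : (w 0 3 • A1 + w 0 4 • A2 + w 1 4 • A3) 4 4 = (0:ℝ) := by
          simp (config := { decide := true }) [A1, A2, A3, Matrix.single,
            Matrix.add_apply, Matrix.sub_apply, Matrix.smul_apply, smul_eq_mul]
          try ring
        rw [hv]; linear_combination (-1/3) * h44
    rw [hw']
    refine add_mem (add_mem ?_ ?_) ?_ <;>
      refine Submodule.smul_mem _ _ (Submodule.subset_span ?_) <;> simp
  · rw [Submodule.span_le]
    rintro x hx
    simp only [Set.mem_insert_iff, Set.mem_singleton_iff] at hx
    rcases hx with rfl | rfl | rfl <;>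
      rw [SetLike.mem_coe, Module.End.mem_eigenspace_iff]
    · exact eigA1
    · exact eigA2
    · exact eigA3
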